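/- Let D be an m×n matrix over 𝔽₂, let V be an invertible upper-triangular n×n matrix, and suppose R = D·V is reduced. Then for all indices i ∈ {0,…,m−1} and j ∈ {0,…,n−1}: column j of R is nonzero with low(R,j) = i if and only if r_D(i,j) − r_D(i+1,j) − r_D(i,j−1) + r_D(i+1,j−1) = 1, where by convention r_D(i,−1) = 0 and r_D(m,j) = 0. (The pivots of any reduced form of D are determined by the ranks of the lower-left submatrices of D; this is the pairing uniqueness formula.) -/

import Mathlib

open Matrix

/-- The `low` of column `j` of `R`: the largest row index `i` with `R i j ≠ 0`,
or `⊥` if the column is zero. -/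
def low {m n : ℕ} (R : Matrix (Fin m) (Fin n) (ZMod 2)) (j : Fin n) : WithBot (Fin m) :=
  (Finset.univ.filter fun i => R i j ≠ 0).max

/-- `R` is reduced if no two distinct nonzero columns have equal lows. -/
def Reduced {m n : ℕ} (R : Matrix (Fin m) (Fin n) (ZMod 2)) : Prop :=
  ∀ j₁ j₂ : Fin n, low R j₁ ≠ ⊥ → low R j₁ = low R j₂ → j₁ = j₂

/-- A square matrix is upper triangular if `V i j = 0` whenever `i > j`. -/
def UpperTri {k : ℕ} (V : Matrix (Fin k) (Fin k) (ZMod 2)) : Prop :=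
  ∀ i j : Fin k, j < i → V i j = 0

/-- `rk D i j`: the rank of the submatrix of `D` on rows `i, …, m-1` and columns
`0, …, j-1` (so the paper's `r_D(i,j)` is `rk D i (j+1)`, and the conventions
`r_D(i,-1) = 0`, `r_D(m,j) = 0` hold automatically since the corresponding
submatrices are empty). -/
noncomputable def rk {m n : ℕ} (D : Matrix (Fin m) (Fin n) (ZMod 2)) (i j : ℕ) : ℕ :=
  (Matrix.of fun (a : {a : Fin m // i ≤ a.val}) (b : {b : Fin n // b.val < j}) => D a.1 b.1).rank

-- facts about low
lemma low_mem {m n : ℕ} {R : Matrix (Fin m) (Fin n) (ZMod 2)} {j : Fin n} {l : Fin m}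
    (h : low R j = ↑l) : R l j ≠ 0 := by
  have := Finset.mem_of_max h
  simpa using this

lemma le_low {m n : ℕ} {R : Matrix (Fin m) (Fin n) (ZMod 2)} {j : Fin n} {a : Fin m}
    (h : R a j ≠ 0) : (↑a : WithBot (Fin m)) ≤ low R j :=
  Finset.le_max (by simpa using h)

-- rk invariance
lemma rk_mul {m n : ℕ} (D : Matrix (Fin m) (Fin n) (ZMod 2))
    (V : Matrix (Fin n) (Fin n) (ZMod 2)) (hV : IsUnit V) (hVt : UpperTri V)
    (i j : ℕ) : rk (D * V) i j = rk D i j := by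
  have hBT : V.BlockTriangular id := fun a b h => hVt a b h
  have hdetV : IsUnit V.det := (Matrix.isUnit_iff_isUnit_det V).mp hV
  have hdiag : ∀ c : Fin n, V c c ≠ 0 := by
    rw [Matrix.det_of_upperTriangular hBT] at hdetV
    have := hdetV.ne_zero
    rw [Finset.prod_ne_zero_iff] at this
    exact fun c => this c (Finset.mem_univ c)
  unfold rk
  set W : Matrix {b : Fin n // b.val < j} {b : Fin n // b.val < j} (ZMod 2) :=
    Matrix.of fun c b => V c.1 b.1 with hW
  have hWdet : IsUnit W.det := by
    have hWBT : W.BlockTriangular id := by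
      intro a b h
      exact hVt a.1 b.1 (by exact_mod_cast h)
    rw [Matrix.det_of_upperTriangular hWBT]
    rw [isUnit_iff_ne_zero, Finset.prod_ne_zero_iff]
    exact fun c _ => hdiag c.1
  have key : (Matrix.of fun (a : {a : Fin m // i ≤ a.val}) (b : {b : Fin n // b.val < j}) =>
      (D * V) a.1 b.1) =
      (Matrix.of fun (a : {a : Fin m // i ≤ a.val}) (b : {b : Fin n // b.val < j}) =>
      D a.1 b.1) * W := by
    ext a b
    simp only [Matrix.of_apply, Matrix.mul_apply, hW]
    rw [← Finset.sum_subtype (Finset.univ.filter fun c : Fin n => c.val < j)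
      (fun c => by simp) (fun c => D a.1 c * V c b.1)]
    rw [Finset.sum_filter_of_ne]
    intro c _ hc
    by_contra h2
    apply hc
    have : V c b.1 = 0 := hVt c b.1 (by have hb := b.2; rw [Fin.lt_def]; omega)
    simp [this]
  rw [key, Matrix.rank_mul_eq_left_of_isUnit_det W _ hWdet]


lemma rank_count {m n : ℕ} (R : Matrix (Fin m) (Fin n) (ZMod 2)) (hR : Reduced R) (i j : ℕ) :
    rk R i j = (Finset.univ.filter fun b : Fin n =>
      b.val < j ∧ ∃ l : Fin m, low R b = ↑l ∧ i ≤ l.val).card := by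
  classical
  set P : Fin n → Prop := fun b => ∃ l : Fin m, low R b = ↑l ∧ i ≤ l.val with hP
  set M : Matrix {a : Fin m // i ≤ a.val} {b : Fin n // b.val < j} (ZMod 2) :=
    Matrix.of fun a b => R a.1 b.1 with hM
  -- columns not satisfying P are zero
  have hzero : ∀ b : {b : Fin n // b.val < j}, ¬ P b.1 → Mᵀ b = 0 := by
    intro b hb
    funext a
    by_contra h
    have hne : R a.1 b.1 ≠ 0 := h
    have hle := le_low hne
    rcases hlow : low R b.1 with _ | l
    · rw [hlow] at hle; exact absurd hle (WithBot.not_coe_le_bot _)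
    · rw [hlow] at hle
      apply hb
      have : a.1 ≤ l := WithBot.coe_le_coe.mp hle
      exact ⟨l, hlow, le_trans a.2 this⟩
  -- independence of the P-columns
  have hind : LinearIndependent (ZMod 2) (fun b : {b : {b : Fin n // b.val < j} // P b.1} => Mᵀ b.1) := by
    rw [Fintype.linearIndependent_iff]
    intro g hg
    by_contra hex
    push_neg at hex
    have ht : (Finset.univ.filter fun b => g b ≠ 0).Nonempty := by
      obtain ⟨b, hb⟩ := hex
      exact ⟨b, by simp [hb]⟩
    obtain ⟨b0, hb0mem, hb0max⟩ := Finset.exists_max_image _ (fun b => low R b.1.1) ht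
    have hgb0 : g b0 ≠ 0 := (Finset.mem_filter.mp hb0mem).2
    obtain ⟨l0, hl0, hil0⟩ := b0.2
    set a0 : {a : Fin m // i ≤ a.val} := ⟨l0, hil0⟩ with ha0
    have hgapp := congrFun hg a0
    rw [Finset.sum_apply] at hgapp
    have hsingle : ∑ b : {b : {b : Fin n // b.val < j} // P b.1},
        (g b • Mᵀ b.1) a0 = g b0 * R l0 b0.1.1 := by
      rw [Finset.sum_eq_single b0]
      · simp [hM, ha0]
      · intro b _ hbne
        by_cases hgb : g b = 0
        · simp [hgb]
        · obtain ⟨lb, hlb, hilb⟩ := b.2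
          have hlowne : low R b.1.1 ≠ low R b0.1.1 := by
            intro heq
            have := hR b.1.1 b0.1.1 (by rw [hlb]; simp) heq
            exact hbne (Subtype.ext (Subtype.ext this))
          have hlt : low R b.1.1 < low R b0.1.1 :=
            lt_of_le_of_ne (hb0max b (by simp [hgb])) hlowne
          have hRz : R l0 b.1.1 = 0 := by
            by_contra h
            have := le_low h
            rw [hl0] at hlt
            rw [hlb] at hlt this
            have h2 : (↑l0 : WithBot (Fin m)) < ↑l0 := lt_of_le_of_lt this hlt
            exact absurd h2 (lt_irrefl _)
          simp [hM, hRz, ha0]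
      · intro h; exact absurd (Finset.mem_univ b0) h
    rw [hsingle] at hgapp
    have hRl0 : R l0 b0.1.1 ≠ 0 := low_mem hl0
    exact hgb0 (by
      rcases mul_eq_zero.mp hgapp with h | h
      · exact h
      · exact absurd h hRl0)
  -- span equality
  have hspan : Submodule.span (ZMod 2) (Set.range Mᵀ) =
      Submodule.span (ZMod 2) (Set.range (fun b : {b : {b : Fin n // b.val < j} // P b.1} => Mᵀ b.1)) := by
    apply le_antisymm
    · rw [Submodule.span_le]
      rintro _ ⟨b, rfl⟩
      by_cases hb : P b.1
      · exact Submodule.subset_span ⟨⟨b, hb⟩, rfl⟩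
      · rw [hzero b hb]; exact Submodule.zero_mem _
    · apply Submodule.span_mono
      rintro _ ⟨b, rfl⟩
      exact ⟨b.1, rfl⟩
  have hcard : Fintype.card {b : {b : Fin n // b.val < j} // P b.1} =
      (Finset.univ.filter fun b : Fin n => b.val < j ∧ P b).card := by
    rw [← Fintype.card_subtype]
    exact Fintype.card_congr (Equiv.subtypeSubtypeEquivSubtypeInter _ _)
  rw [show rk R i j = M.rank from rfl, Matrix.rank_eq_finrank_span_cols]
  change Module.finrank (ZMod 2) (Submodule.span (ZMod 2) (Set.range Mᵀ)) = _
  rw [hspan,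
    finrank_span_eq_card hind, hcard]

lemma card_succ {n : ℕ} (Q : Fin n → Prop) [DecidablePred Q] (j : Fin n) :
    (Finset.univ.filter fun b : Fin n => b.val < j.val + 1 ∧ Q b).card
      = (Finset.univ.filter fun b : Fin n => b.val < j.val ∧ Q b).card
        + (if Q j then 1 else 0) := by
  have hiff : ∀ b ∈ Finset.univ, ((b : Fin n).val < j.val + 1 ∧ Q b) ↔
      ((b.val < j.val ∧ Q b) ∨ (b = j ∧ Q b)) := by
    intro b _
    constructor
    · rintro ⟨h1, h2⟩
      rcases Nat.lt_succ_iff_lt_or_eq.mp h1 with h | h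
      · exact Or.inl ⟨h, h2⟩
      · exact Or.inr ⟨Fin.ext h, h2⟩
    · rintro (⟨h1, h2⟩ | ⟨rfl, h2⟩)
      · exact ⟨Nat.lt_succ_of_lt h1, h2⟩
      · exact ⟨Nat.lt_succ_self _, h2⟩
  rw [Finset.filter_congr hiff, Finset.filter_or, Finset.card_union_of_disjoint]
  · congr 1
    by_cases hQ : Q j
    · rw [if_pos hQ]
      have : ∀ b ∈ Finset.univ, ((b : Fin n) = j ∧ Q b) ↔ b = j :=
        fun b _ => ⟨And.left, fun h => ⟨h, h ▸ hQ⟩⟩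
      rw [Finset.filter_congr this, Finset.filter_eq']
      simp
    · rw [if_neg hQ]
      rw [Finset.card_eq_zero]
      ext b
      simp only [Finset.mem_filter, Finset.mem_univ, true_and, Finset.notMem_empty, iff_false]
      rintro ⟨rfl, h⟩
      exact hQ h
  · rw [Finset.disjoint_left]
    intro b hb1 hb2
    have h1 := (Finset.mem_filter.mp hb1).2
    have h2 := (Finset.mem_filter.mp hb2).2
    rw [h2.1] at h1
    exact absurd h1.1 (lt_irrefl _)

/-- pairing uniqueness formula. Column `j` of the reduced matrix is
nonzero with `low` equal to `i` iff
`r_D(i,j) − r_D(i+1,j) − r_D(i,j−1) + r_D(i+1,j−1) = 1`, written additively. -/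
theorem stmt_14 {m n : ℕ} (D : Matrix (Fin m) (Fin n) (ZMod 2))
    (V : Matrix (Fin n) (Fin n) (ZMod 2)) (hV : IsUnit V) (hVt : UpperTri V)
    (hR : Reduced (D * V)) :
    ∀ (i : Fin m) (j : Fin n),
      low (D * V) j = ↑i ↔
        rk D i.val (j.val + 1) + rk D (i.val + 1) j.val
          = rk D (i.val + 1) (j.val + 1) + rk D i.val j.val + 1 := by
  classical
  intro i j
  set R := D * V with hRdef
  have hrk : ∀ i' j' : ℕ, rk D i' j' = (Finset.univ.filter fun b : Fin n =>
      b.val < j' ∧ ∃ l : Fin m, low R b = ↑l ∧ i' ≤ l.val).card := fun i' j' => by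
    rw [← rk_mul D V hV hVt, rank_count R hR]
  have key : low R j = ↑i ↔
      ((∃ l : Fin m, low R j = ↑l ∧ i.val ≤ l.val) ∧
        ¬ (∃ l : Fin m, low R j = ↑l ∧ i.val + 1 ≤ l.val)) := by
    constructor
    · intro h
      refine ⟨⟨i, h, le_refl _⟩, ?_⟩
      rintro ⟨l, hl, hll⟩
      rw [h] at hl
      have hli : l = i := by exact_mod_cast hl.symm
      rw [hli] at hll
      omega
    · rintro ⟨⟨l, hl, h1l⟩, h2⟩
      have hle : l.val ≤ i.val := by
        by_contra hc
        exact h2 ⟨l, hl, by omega⟩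
      have hli : l = i := Fin.ext (le_antisymm hle h1l)
      rw [← hli]
      exact hl
  rw [hrk i.val (j.val + 1), hrk (i.val + 1) j.val, hrk (i.val + 1) (j.val + 1),
    hrk i.val j.val, card_succ (fun b => ∃ l : Fin m, low R b = ↑l ∧ i.val ≤ l.val) j,
    card_succ (fun b => ∃ l : Fin m, low R b = ↑l ∧ i.val + 1 ≤ l.val) j, key]
  by_cases h1 : ∃ l : Fin m, low R j = ↑l ∧ i.val ≤ l.val <;>
    by_cases h2 : ∃ l : Fin m, low R j = ↑l ∧ i.val + 1 ≤ l.val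
  · rw [if_pos h1, if_pos h2]
    exact iff_of_false (fun h => h.2 h2) (by omega)
  · rw [if_pos h1, if_neg h2]
    exact iff_of_true ⟨h1, h2⟩ (by omega)
  · obtain ⟨l, hl, hh⟩ := h2
    exact absurd ⟨l, hl, by omega⟩ h1
  · rw [if_neg h1, if_neg h2]
    exact iff_of_false (fun h => h1 h.1) (by omega)
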